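/- For every real x ≥ 2, ∑_{n ≤ x} φ(n) = (3/π²) x² + O(x log x). -/

import Mathlib

open ArithmeticFunction Finset
open ArithmeticFunction
open scoped ArithmeticFunction.Moebius
theorem Lmu : LSeries (fun n => (μ n : ℂ)) 2 = 6 / (Real.pi : ℂ)^2 := by
  have h : (1:ℝ) < (2:ℂ).re := by norm_num
  have := LSeries_zeta_mul_Lseries_moebius (s := 2) h
  rw [LSeries_zeta_eq_riemannZeta h, riemannZeta_two] at this
  have hpi : ((Real.pi : ℂ))^2 ≠ 0 := by
    simpa using Complex.ofReal_ne_zero.mpr Real.pi_ne_zero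
  field_simp at this ⊢
  linear_combination this


theorem Mreal : ∑' d : ℕ, (μ d : ℝ) / (d:ℝ)^2 = 6 / Real.pi^2 := by
  have key : LSeries (fun n => (μ n : ℂ)) 2 = ((∑' d : ℕ, (μ d : ℝ) / (d:ℝ)^2 : ℝ) : ℂ) := by
    rw [LSeries]
    have : ∀ n : ℕ, LSeries.term (fun n => (μ n : ℂ)) 2 n = (((μ n : ℝ) / (n:ℝ)^2 : ℝ) : ℂ) := by
      intro n
      rcases eq_or_ne n 0 with rfl | hn
      · simp [LSeries.term]
      · rw [LSeries.term_of_ne_zero hn]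
        push_cast
        rw [Complex.cpow_ofNat]
    rw [tsum_congr this, ← Complex.ofReal_tsum]
  rw [Lmu] at key
  have : ((∑' d : ℕ, (μ d : ℝ) / (d:ℝ)^2 : ℝ) : ℂ) = ((6 / Real.pi^2 : ℝ) : ℂ) := by
    rw [← key]; push_cast; ring
  exact_mod_cast this
open ArithmeticFunction Finset

theorem totient_sum_eq (N : ℕ) :
    (∑ n ∈ Finset.Icc 1 N, (Nat.totient n : ℝ)) =
      ∑ d ∈ Finset.Icc 1 N, (μ d : ℝ) * (∑ e ∈ Finset.Icc 1 (N / d), (e : ℝ)) := by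
  have h1 : ∀ n > 0, (Nat.totient n : ℝ) =
      ∑ x ∈ n.divisorsAntidiagonal, (μ x.1 : ℝ) * (x.2 : ℝ) := by
    have := (sum_eq_iff_sum_mul_moebius_eq (R := ℝ)
        (f := fun n => (Nat.totient n : ℝ)) (g := fun n => (n : ℝ))).mp ?_
    · exact fun n hn => (this n hn).symm
    · intro n hn
      rw [← Nat.cast_sum]
      exact_mod_cast congrArg (fun k : ℕ => (k : ℝ)) (Nat.sum_totient n)
  rw [Finset.sum_congr rfl (fun n hn => h1 n (mem_Icc.mp hn).1)]
  simp_rw [Finset.mul_sum]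
  rw [Finset.sum_sigma', Finset.sum_sigma']
  refine Finset.sum_nbij' (fun p => ⟨p.2.1, p.2.2⟩) (fun p => ⟨p.1 * p.2, (p.1, p.2)⟩)
    ?_ ?_ ?_ ?_ ?_
  · rintro ⟨n, x⟩ h
    simp only [mem_sigma, mem_Icc, Nat.mem_divisorsAntidiagonal] at h ⊢
    obtain ⟨⟨h1n, h2n⟩, hx, hn0⟩ := h
    have hx1 : 0 < x.1 := Nat.pos_of_ne_zero (by intro h0; rw [h0] at hx; simp at hx; omega)
    have hx2 : 0 < x.2 := Nat.pos_of_ne_zero (by intro h0; rw [h0] at hx; simp at hx; omega)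
    refine ⟨⟨hx1, ?_⟩, hx2, ?_⟩
    · calc x.1 ≤ x.1 * x.2 := Nat.le_mul_of_pos_right _ hx2
        _ ≤ N := by omega
    · rw [Nat.le_div_iff_mul_le hx1]
      calc x.2 * x.1 = x.1 * x.2 := Nat.mul_comm _ _
        _ ≤ N := by omega
  · rintro ⟨d, e⟩ h
    simp only [mem_sigma, mem_Icc, Nat.mem_divisorsAntidiagonal] at h ⊢
    obtain ⟨⟨h1d, h2d⟩, h1e, h2e⟩ := h
    have hde : e * d ≤ N := (Nat.le_div_iff_mul_le (by omega)).mp h2e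
    have hde' : d * e ≤ N := by rw [Nat.mul_comm]; exact hde
    have hpos : d * e ≠ 0 := by positivity
    exact ⟨⟨Nat.one_le_iff_ne_zero.mpr hpos, hde'⟩, trivial, hpos⟩
  · rintro ⟨n, x⟩ h
    simp only [mem_sigma, mem_Icc, Nat.mem_divisorsAntidiagonal] at h
    obtain ⟨_, hx, _⟩ := h
    simp [hx]
  · rintro ⟨d, e⟩ _
    rfl
  · rintro ⟨n, x⟩ _
    rfl
open ArithmeticFunction Finset

theorem mu_term_abs_le (n : ℕ) : |(μ n : ℝ) / (n:ℝ)^2| ≤ ((n:ℝ)^2)⁻¹ := by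
  rcases eq_or_ne n 0 with rfl | hn
  · simp
  rw [abs_div, abs_pow, Nat.abs_cast, div_le_iff₀ (by positivity), inv_mul_cancel₀ (by positivity)]
  exact_mod_cast (by exact_mod_cast abs_moebius_le_one : |(μ n : ℤ)| ≤ 1)

theorem musummable : Summable (fun d : ℕ => |(μ d : ℝ) / (d:ℝ)^2|) := by
  apply Summable.of_nonneg_of_le (fun d => abs_nonneg _) mu_term_abs_le
  simpa using Real.summable_one_div_nat_pow.mpr (by norm_num : 1 < 2)

theorem musummable' : Summable (fun d : ℕ => (μ d : ℝ) / (d:ℝ)^2) :=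
  musummable.of_abs

set_option maxHeartbeats 1000000 in
theorem tail_bound (N : ℕ) :
    |(∑' d : ℕ, (μ d : ℝ) / (d:ℝ)^2) - ∑ d ∈ Finset.Icc 1 N, (μ d : ℝ) / (d:ℝ)^2|
      ≤ 2 / (N + 1) := by
  set f : ℕ → ℝ := fun d => (μ d : ℝ) / (d:ℝ)^2 with hf
  have hIcc : ∑ d ∈ Finset.range (N + 1), f d = ∑ d ∈ Finset.Icc 1 N, f d := by
    rw [Finset.range_eq_Ico, Finset.sum_eq_sum_Ico_succ_bot (by omega), Finset.Ico_add_one_right_eq_Icc]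
    simp [hf]
  have htail := Summable.sum_add_tsum_nat_add (f := f) (N + 1) musummable'
  have h1 : (∑' d : ℕ, f d) - ∑ d ∈ Finset.Icc 1 N, f d = ∑' i : ℕ, f (i + (N + 1)) := by
    rw [← hIcc]; linarith
  rw [h1]
  have hg : Summable (fun i : ℕ => (((i + (N+1) : ℕ):ℝ)^2)⁻¹) := by
    have h0 : Summable (fun n : ℕ => ((n:ℝ)^2)⁻¹) := by
      simpa using Real.summable_one_div_nat_pow.mpr (by norm_num : (1:ℕ) < 2)
    exact (summable_nat_add_iff (N+1)).mpr h0
  have habs : Summable (fun i : ℕ => |f (i + (N+1))|) := by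
    apply Summable.of_nonneg_of_le (fun i => abs_nonneg _) (fun i => ?_) hg
    simpa [hf] using mu_term_abs_le (i + (N+1))
  calc |∑' i : ℕ, f (i + (N + 1))| ≤ ∑' i : ℕ, |f (i + (N + 1))| := by
        simpa [Real.norm_eq_abs] using norm_tsum_le_tsum_norm (f := fun i : ℕ => f (i + (N+1)))
          (by simpa [Real.norm_eq_abs] using habs)
    _ ≤ ∑' i : ℕ, (((i + (N+1) : ℕ):ℝ)^2)⁻¹ := by
        apply Summable.tsum_le_tsum (fun i => ?_) habs hg
        simpa [hf] using mu_term_abs_le (i + (N+1))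
    _ ≤ 2 / (N + 1) := by
        apply Summable.tsum_le_of_sum_le hg
        intro s
        obtain ⟨n, hn⟩ := s.exists_nat_subset_range
        calc ∑ i ∈ s, (((i + (N+1) : ℕ):ℝ)^2)⁻¹
            ≤ ∑ i ∈ Finset.range n, (((i + (N+1) : ℕ):ℝ)^2)⁻¹ :=
              Finset.sum_le_sum_of_subset_of_nonneg hn (fun i _ _ => by positivity)
          _ = ∑ j ∈ Finset.Ico (N+1) (N+1+n), ((j:ℝ)^2)⁻¹ := by
              rw [Finset.sum_Ico_eq_sum_range]
              simp [add_comm]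
          _ = ∑ j ∈ Finset.Ioo N (N+1+n), ((j:ℝ)^2)⁻¹ := by rw [Finset.Ico_add_one_left_eq_Ioo]
          _ ≤ 2 / (N + 1) := by
              have := sum_Ioo_inv_sq_le (α := ℝ) N (N+1+n)
              simpa using this

theorem harmonic_Icc (N : ℕ) : ∑ d ∈ Finset.Icc 1 N, (d:ℝ)⁻¹ = (harmonic N : ℝ) := by
  rw [harmonic]
  push_cast
  rw [← Finset.Ico_add_one_right_eq_Icc, Finset.sum_Ico_eq_sum_range]
  simp [add_comm]

theorem gauss_Icc (m : ℕ) : ∑ e ∈ Finset.Icc 1 m, (e:ℝ) = m * (m + 1) / 2 := by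
  have h1 : ∑ e ∈ Finset.range (m + 1), e = ∑ e ∈ Finset.Icc 1 m, e := by
    rw [Finset.range_eq_Ico, Finset.sum_eq_sum_Ico_succ_bot (by omega), Finset.Ico_add_one_right_eq_Icc]
    simp
  have h2 := Finset.sum_range_id_mul_two (m + 1)
  rw [h1] at h2
  have : ((∑ e ∈ Finset.Icc 1 m, e : ℕ) : ℝ) * 2 = (m + 1) * m := by
    exact_mod_cast congrArg (fun k : ℕ => (k:ℝ)) h2
  push_cast at this
  linarith

set_option maxHeartbeats 1000000 in
/-- `∑_{n ≤ x} φ(n) = (3/π²) x² + O(x log x)` for `x ≥ 2`, absolute constant. -/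
theorem sum_totient_asymptotic : ∃ C : ℝ, 0 < C ∧ ∀ x : ℝ, 2 ≤ x →
    |(∑ n ∈ Finset.Icc 1 ⌊x⌋₊, (Nat.totient n : ℝ)) - 3 / Real.pi ^ 2 * x ^ 2|
      ≤ C * x * Real.log x := by
  refine ⟨20, by norm_num, fun x hx => ?_⟩
  set N := ⌊x⌋₊ with hN
  have hx0 : (0:ℝ) < x := by linarith
  have hN2 : 2 ≤ N := Nat.le_floor (by exact_mod_cast hx)
  have hNx : (N:ℝ) ≤ x := Nat.floor_le (le_of_lt hx0)
  have hxN : x < N + 1 := Nat.lt_floor_add_one x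
  have hlog2 : (0.6931 : ℝ) < Real.log 2 := by
    have := Real.log_two_gt_d9; linarith
  have hlogx : Real.log 2 ≤ Real.log x := Real.log_le_log (by norm_num) hx
  have hlogpos : (0.6931 : ℝ) < Real.log x := lt_of_lt_of_le hlog2 hlogx
  set M : ℝ := ∑' d : ℕ, (μ d : ℝ) / (d:ℝ)^2 with hM
  set P : ℝ := ∑ d ∈ Finset.Icc 1 N, (μ d : ℝ) / (d:ℝ)^2 with hP
  rw [totient_sum_eq N]
  set G : ℕ → ℝ := fun d => ∑ e ∈ Finset.Icc 1 (N / d), (e : ℝ) with hG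
  have hMval : M = 6 / Real.pi ^ 2 := Mreal
  have hsplit : (∑ d ∈ Finset.Icc 1 N, (μ d : ℝ) * G d) - 3 / Real.pi ^ 2 * x ^ 2
      = (∑ d ∈ Finset.Icc 1 N, ((μ d : ℝ) * G d - x^2/2 * ((μ d : ℝ)/(d:ℝ)^2)))
        + x^2/2 * (P - M) := by
    rw [Finset.sum_sub_distrib, ← Finset.mul_sum, ← hP, hMval]
    ring
  rw [hsplit]
  -- per-term bound
  have hterm : ∀ d ∈ Finset.Icc 1 N,
      |(μ d : ℝ) * G d - x^2/2 * ((μ d : ℝ)/(d:ℝ)^2)| ≤ 3 * x * (d:ℝ)⁻¹ := by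
    intro d hd
    rw [Finset.mem_Icc] at hd
    obtain ⟨hd1, hd2⟩ := hd
    have hdpos : (0:ℝ) < d := by exact_mod_cast hd1
    set m : ℕ := N / d with hm
    have hGd : G d = (m:ℝ) * (m + 1) / 2 := gauss_Icc m
    have h1 : (m:ℝ) * d ≤ N := by exact_mod_cast Nat.div_mul_le_self N d
    have h2 : (N:ℝ) < m * d + d := by exact_mod_cast Nat.lt_div_mul_add (by omega : 0 < d)
    have hdx : (d:ℝ) ≤ x := le_trans (by exact_mod_cast hd2) hNx
    have hy1 : 1 ≤ x / d := (one_le_div hdpos).mpr hdx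
    have hmy : (m:ℝ) ≤ x / d := by
      rw [le_div_iff₀ hdpos]; linarith
    have hym : x / d ≤ m + 2 := by
      rw [div_le_iff₀ hdpos]
      have : (1:ℝ) ≤ d := by exact_mod_cast hd1
      nlinarith
    have hfac : (μ d : ℝ) * G d - x^2/2 * ((μ d : ℝ)/(d:ℝ)^2)
        = (μ d : ℝ) * (G d - (x/d)^2/2) := by
      field_simp
    rw [hfac, abs_mul]
    have habs_mu : |(μ d : ℝ)| ≤ 1 := by
      exact_mod_cast (by exact_mod_cast abs_moebius_le_one : |(μ d : ℤ)| ≤ 1)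
    have hbound : |G d - (x/d)^2/2| ≤ 3 * (x/d) := by
      rw [hGd, abs_le]
      have hm0 : (0:ℝ) ≤ m := Nat.cast_nonneg m
      constructor <;> nlinarith
    calc |(μ d:ℝ)| * |G d - (x/d)^2/2| ≤ 1 * (3 * (x/d)) :=
          mul_le_mul habs_mu hbound (abs_nonneg _) zero_le_one
      _ = 3 * x * (d:ℝ)⁻¹ := by field_simp
  -- sum bound T1
  have hT1 : |∑ d ∈ Finset.Icc 1 N, ((μ d : ℝ) * G d - x^2/2 * ((μ d : ℝ)/(d:ℝ)^2))|
      ≤ 8 * x * Real.log x := by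
    calc |∑ d ∈ Finset.Icc 1 N, ((μ d : ℝ) * G d - x^2/2 * ((μ d : ℝ)/(d:ℝ)^2))|
        ≤ ∑ d ∈ Finset.Icc 1 N, |(μ d : ℝ) * G d - x^2/2 * ((μ d : ℝ)/(d:ℝ)^2)| :=
          Finset.abs_sum_le_sum_abs _ _
      _ ≤ ∑ d ∈ Finset.Icc 1 N, 3 * x * (d:ℝ)⁻¹ := Finset.sum_le_sum hterm
      _ = 3 * x * ∑ d ∈ Finset.Icc 1 N, (d:ℝ)⁻¹ := by rw [Finset.mul_sum]
      _ ≤ 3 * x * (1 + Real.log N) := by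
          rw [harmonic_Icc]
          have := harmonic_le_one_add_log N
          have h3x : (0:ℝ) ≤ 3 * x := by linarith
          exact mul_le_mul_of_nonneg_left this h3x
      _ ≤ 3 * x * (1 + Real.log x) := by
          have hlogN : Real.log N ≤ Real.log x :=
            Real.log_le_log (by exact_mod_cast (by omega : 0 < N) : (0:ℝ) < N) hNx
          nlinarith
      _ ≤ 8 * x * Real.log x := by nlinarith
  -- tail bound T2
  have hT2 : |x^2/2 * (P - M)| ≤ 2 * x * Real.log x := by
    rw [abs_mul, abs_sub_comm]
    have htail := tail_bound N
    rw [← hM, ← hP] at htail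
    have hx2 : |x^2/2| = x^2/2 := abs_of_nonneg (by positivity)
    rw [hx2]
    have hstep : x^2/2 * |M - P| ≤ x^2/2 * (2 / (N+1)) := by
      apply mul_le_mul_of_nonneg_left htail (by positivity)
    have hNx1 : x < (N:ℝ) + 1 := hxN
    have h2' : x^2/2 * (2/(N+1)) ≤ x := by
      rw [div_mul_div_comm]
      rw [div_le_iff₀ (by positivity)]
      nlinarith
    have : x ≤ 2 * x * Real.log x := by nlinarith
    linarith
  calc |(∑ d ∈ Finset.Icc 1 N, ((μ d : ℝ) * G d - x^2/2 * ((μ d : ℝ)/(d:ℝ)^2)))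
        + x^2/2 * (P - M)|
      ≤ |∑ d ∈ Finset.Icc 1 N, ((μ d : ℝ) * G d - x^2/2 * ((μ d : ℝ)/(d:ℝ)^2))|
        + |x^2/2 * (P - M)| := abs_add_le _ _
    _ ≤ 8 * x * Real.log x + 2 * x * Real.log x := add_le_add hT1 hT2
    _ ≤ 20 * x * Real.log x := by nlinarith
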